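/- Let Γ be a connected graph with vertex set M, and suppose U is an exact perspectivity on Γ, i.e., a uniformity on M such that every entourage contains all but finitely many edges of Γ, and the intersection of all entourages equals the diagonal. Then Γ is fine: for every pair of vertices x, y and every n, the set of arcs (embedded paths) of length at most n from x to y is finite. -/

import Mathlib

open Uniformity
open scoped SetRel

section Aux

variable {M : Type*}

private lemma walk_getVert_eq_getD {Γ : SimpleGraph M} {x y : M} (w : Γ.Walk x y) :
    ∀ i, w.getVert i = w.support.getD i y := by
  induction w with
  | nil =>
    intro i
    cases i with
    | zero => rfl
    | succ n => simp [SimpleGraph.Walk.getVert]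
  | cons h p ih =>
    intro i
    cases i with
    | zero => simp [SimpleGraph.Walk.getVert]
    | succ n =>
      simpa [SimpleGraph.Walk.getVert_cons_succ, SimpleGraph.Walk.support_cons] using ih n

private lemma walk_isPath_getVert_injOn {Γ : SimpleGraph M} {x y : M} {w : Γ.Walk x y}
    (hw : w.IsPath) : Set.InjOn w.getVert (Set.Iic w.length) := by
  intro i hi j hj hij
  have hi' : i < w.support.length := by
    rw [SimpleGraph.Walk.length_support]
    exact Nat.lt_succ_of_le hi
  have hj' : j < w.support.length := by
    rw [SimpleGraph.Walk.length_support]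
    exact Nat.lt_succ_of_le hj
  rw [walk_getVert_eq_getD, walk_getVert_eq_getD, List.getD_eq_getElem _ _ hi',
    List.getD_eq_getElem _ _ hj'] at hij
  exact (hw.support_nodup.getElem_inj_iff).mp hij

private lemma walk_ext_getVert {Γ : SimpleGraph M} {x y : M} (w₁ : Γ.Walk x y) :
    ∀ (w₂ : Γ.Walk x y), w₁.length = w₂.length →
      (∀ i, w₁.getVert i = w₂.getVert i) → w₁ = w₂ := by
  induction w₁ with
  | nil =>
    intro w₂ hlen _
    cases w₂ with
    | nil => rfl
    | cons h p => simp at hlen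
  | cons h p ih =>
    intro w₂ hlen hv
    cases w₂ with
    | nil => simp at hlen
    | cons h' p' =>
      have hb := hv 1
      simp only [SimpleGraph.Walk.getVert_cons_succ, SimpleGraph.Walk.getVert_zero] at hb
      subst hb
      rw [ih p' (by simpa using hlen) (fun i => hv (i + 1))]

/-- Coordinate-wise refinement of an infinite family of sequences: on an infinite
subfamily, each coordinate in `K` is either constant or injective. -/
private lemma refine_coords [Nonempty M] (K : Finset ℕ) (A : Set (ℕ → M)) (hA : A.Infinite) :
    ∃ B ⊆ A, B.Infinite ∧ ∀ k ∈ K,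
      (∃ c, ∀ σ ∈ B, σ k = c) ∨ Set.InjOn (fun σ => σ k) B := by
  classical
  induction K using Finset.induction_on with
  | empty => exact ⟨A, subset_rfl, hA, by simp⟩
  | @insert a K hk ih =>
    obtain ⟨B, hBA, hBinf, hB⟩ := ih
    set f : (ℕ → M) → M := fun σ => σ a with hf
    by_cases hfin : (f '' B).Finite
    · -- pigeonhole: some fiber is infinite
      have hcex : ∃ c ∈ f '' B, {σ ∈ B | σ a = c}.Infinite := by
        by_contra hcon
        push_neg at hcon
        apply hBinf
        have hsub : B ⊆ ⋃ c ∈ f '' B, {σ ∈ B | σ a = c} := by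
          intro σ hσ
          exact Set.mem_biUnion ⟨σ, hσ, rfl⟩ ⟨hσ, rfl⟩
        exact (hfin.biUnion hcon).subset hsub
      obtain ⟨c, -, hc⟩ := hcex
      refine ⟨{σ ∈ B | σ a = c}, (Set.sep_subset _ _).trans hBA, hc, ?_⟩
      intro k hk'
      rcases Finset.mem_insert.mp hk' with rfl | hk''
      · exact Or.inl ⟨c, fun σ hσ => hσ.2⟩
      · rcases hB k hk'' with ⟨c', hc'⟩ | h
        · exact Or.inl ⟨c', fun σ hσ => hc' σ hσ.1⟩
        · exact Or.inr (h.mono (Set.sep_subset _ _))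
    · -- choose an injective subfamily
      have hmem : ∀ c ∈ f '' B, Function.invFunOn f B c ∈ B ∧ f (Function.invFunOn f B c) = c := by
        intro c hc
        obtain ⟨σ, hσ, rfl⟩ := hc
        exact Function.invFunOn_pos ⟨σ, hσ, rfl⟩
      set B' : Set (ℕ → M) := Function.invFunOn f B '' (f '' B) with hB'
      have hsub : B' ⊆ B := by
        rintro _ ⟨c, hc, rfl⟩
        exact (hmem c hc).1
      have himg : f '' B' = f '' B := by
        apply Set.Subset.antisymm
        · rintro _ ⟨_, ⟨c, hc, rfl⟩, rfl⟩
          rw [(hmem c hc).2]; exact hc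
        · intro c hc
          exact ⟨_, ⟨c, hc, rfl⟩, (hmem c hc).2⟩
      have hinf' : B'.Infinite := by
        apply Set.Infinite.of_image f
        rw [himg]
        exact hfin
      have hinj' : Set.InjOn f B' := by
        rintro _ ⟨c1, hc1, rfl⟩ _ ⟨c2, hc2, rfl⟩ h
        rw [(hmem c1 hc1).2, (hmem c2 hc2).2] at h
        rw [h]
      refine ⟨B', hsub.trans hBA, hinf', ?_⟩
      intro k hk'
      rcases Finset.mem_insert.mp hk' with rfl | hk''
      · exact Or.inr hinj'
      · rcases hB k hk'' with ⟨c', hc'⟩ | h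
        · exact Or.inl ⟨c', fun σ hσ => hc' σ (hsub hσ)⟩
        · exact Or.inr (h.mono hsub)

/-- Core lemma: a family of injective adjacency-sequences with both endpoints pinned
must be finite, given an exact perspectivity. -/
private lemma core_finite {Γ : SimpleGraph M} (U : Filter (M × M))
    (hcomp : ∀ s ∈ U, ∃ t ∈ U, t ○ t ⊆ s)
    (hpersp : ∀ s ∈ U, {p : M × M | Γ.Adj p.1 p.2 ∧ p ∉ s}.Finite)
    (hexact : ⋂₀ U.sets = SetRel.id)
    (x y : M) (m : ℕ) (A : Set (ℕ → M))
    (h0 : ∀ σ ∈ A, σ 0 = x)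
    (hm : ∀ σ ∈ A, ∀ i, m ≤ i → σ i = y)
    (hadj : ∀ σ ∈ A, ∀ i < m, Γ.Adj (σ i) (σ (i + 1)))
    (hinj : ∀ σ ∈ A, Set.InjOn σ (Set.Iic m)) :
    A.Finite := by
  classical
  by_contra hA
  have hAinf : A.Infinite := hA
  haveI : Nonempty M := ⟨x⟩
  obtain ⟨B, hBA, hBinf, hB⟩ := refine_coords (Finset.range (m + 1)) A hAinf
  set Cst : ℕ → Prop := fun k => ∃ c, ∀ σ ∈ B, σ k = c with hCst
  have hC0 : Cst 0 := ⟨x, fun σ hσ => h0 σ (hBA hσ)⟩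
  have hCm : ∀ k, m ≤ k → Cst k := fun k hk => ⟨y, fun σ hσ => hm σ (hBA hσ) k hk⟩
  have hInj : ∀ k, k ≤ m → ¬ Cst k → Set.InjOn (fun σ => σ k) B := by
    intro k hkm hnc
    exact (hB k (Finset.mem_range.mpr (by omega))).resolve_left hnc
  -- there is a non-constant coordinate
  have hex : ∃ k, ¬ Cst k := by
    by_contra hall
    push_neg at hall
    apply hBinf
    apply Set.Subsingleton.finite
    intro σ hσ τ hτ
    funext i
    obtain ⟨c, hc⟩ := hall i
    rw [hc σ hσ, hc τ hτ]
  set k0 := Nat.find hex with hk0def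
  have hk0 : ¬ Cst k0 := Nat.find_spec hex
  have hk0pos : 0 < k0 := by
    rcases Nat.eq_zero_or_pos k0 with h | h
    · exact absurd (h ▸ hC0) hk0
    · exact h
  have hk0m : k0 < m := by
    by_contra hge
    exact hk0 (hCm k0 (by omega))
  have hex1 : ∃ k, k0 ≤ k ∧ Cst k := ⟨m, hk0m.le, hCm m le_rfl⟩
  set k1 := Nat.find hex1 with hk1def
  have hk1ge : k0 ≤ k1 := (Nat.find_spec hex1).1
  have hCk1 : Cst k1 := (Nat.find_spec hex1).2
  obtain ⟨c', hc'⟩ := hCk1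
  have hk1gt : k0 < k1 := lt_of_le_of_ne hk1ge (fun h => hk0 (by rw [h]; exact ⟨c', hc'⟩))
  have hk1m : k1 ≤ m := Nat.find_min' hex1 ⟨hk0m.le, hCm m le_rfl⟩
  have hmid : ∀ k, k0 ≤ k → k < k1 → ¬ Cst k := by
    intro k h1 h2 hc
    exact Nat.find_min hex1 h2 ⟨h1, hc⟩
  obtain ⟨cj, hcj⟩ : Cst (k0 - 1) := by
    have := Nat.find_min hex (show k0 - 1 < k0 by omega)
    exact of_not_not this
  -- main claim, by induction along the arc
  have claim : ∀ k, k0 ≤ k → k < k1 → ∀ u ∈ U, {σ ∈ B | (cj, σ k) ∉ u}.Finite := by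
    intro k
    induction k with
    | zero => intro h1 _; omega
    | succ k ihk =>
      intro h1 h2 u hu
      by_cases hkge : k0 ≤ k
      · -- inductive step, compose entourages
        obtain ⟨t, ht, htu⟩ := hcomp u hu
        have hfin1 := ihk hkge (by omega) t ht
        have hfin2 : {σ ∈ B | (σ k, σ (k + 1)) ∉ t}.Finite := by
          have hinj2 : Set.InjOn (fun σ => σ (k + 1)) B :=
            hInj (k + 1) (by omega) (hmid (k + 1) h1 h2)
          apply Set.Finite.of_finite_image (f := fun σ => (σ k, σ (k + 1)))
          · apply (hpersp t ht).subset
            rintro _ ⟨σ, hσ, rfl⟩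
            exact ⟨hadj σ (hBA hσ.1) k (by omega), hσ.2⟩
          · intro σ1 hσ1 σ2 hσ2 he
            exact hinj2 hσ1.1 hσ2.1 (congrArg Prod.snd he)
        apply (hfin1.union hfin2).subset
        intro σ hσ
        by_contra hcon
        simp only [Set.mem_union, Set.mem_setOf_eq, not_or, not_and, not_not] at hcon
        exact hσ.2 (htu ⟨σ k, hcon.1 hσ.1, hcon.2 hσ.1⟩)
      · -- base case : k + 1 = k0
        have hkk : k + 1 = k0 := by omega
        have hinj2 : Set.InjOn (fun σ => σ (k + 1)) B :=
          hInj (k + 1) (by omega) (hkk ▸ hk0)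
        apply Set.Finite.of_finite_image (f := fun σ => (σ k, σ (k + 1)))
        · apply (hpersp u hu).subset
          rintro _ ⟨σ, hσ, rfl⟩
          refine ⟨hadj σ (hBA hσ.1) k (by omega), ?_⟩
          have hck : σ k = cj := by
            have := hcj σ hσ.1
            rwa [show k0 - 1 = k by omega] at this
          show (σ k, σ (k + 1)) ∉ u
          rw [hck]
          exact hσ.2
        · intro σ1 hσ1 σ2 hσ2 he
          exact hinj2 hσ1.1 hσ2.1 (congrArg Prod.snd he)
  -- derive the fixed pair (cj, c') lying in every entourage
  have hpair : ∀ u ∈ U, (cj, c') ∈ u := by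
    intro u hu
    obtain ⟨t, ht, htu⟩ := hcomp u hu
    have hfin1 := claim (k1 - 1) (by omega) (by omega) t ht
    have hfin2 : {σ ∈ B | (σ (k1 - 1), σ k1) ∉ t}.Finite := by
      have hinj1 : Set.InjOn (fun σ => σ (k1 - 1)) B :=
        hInj (k1 - 1) (by omega) (hmid (k1 - 1) (by omega) (by omega))
      apply Set.Finite.of_finite_image (f := fun σ => (σ (k1 - 1), σ k1))
      · apply (hpersp t ht).subset
        rintro _ ⟨σ, hσ, rfl⟩
        refine ⟨?_, hσ.2⟩
        have := hadj σ (hBA hσ.1) (k1 - 1) (by omega)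
        rwa [show k1 - 1 + 1 = k1 by omega] at this
      · intro σ1 hσ1 σ2 hσ2 he
        exact hinj1 hσ1.1 hσ2.1 (congrArg Prod.fst he)
    obtain ⟨σ, hσB, hσ⟩ := Set.Infinite.exists_notMem_finite hBinf (hfin1.union hfin2)
    simp only [Set.mem_union, Set.mem_setOf_eq, not_or, not_and, not_not] at hσ
    have e1 : (cj, σ (k1 - 1)) ∈ t := hσ.1 hσB
    have e2 : (σ (k1 - 1), σ k1) ∈ t := hσ.2 hσB
    rw [hc' σ hσB] at e2
    exact htu ⟨σ (k1 - 1), e1, e2⟩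
  have hmem : (cj, c') ∈ ⋂₀ U.sets := Set.mem_sInter.mpr fun s hs => hpair s hs
  rw [hexact, SetRel.mem_id] at hmem
  -- contradiction with injectivity of any member of B
  obtain ⟨σ, hσ⟩ := hBinf.nonempty
  have heq : σ (k0 - 1) = σ k1 := by
    rw [hcj σ hσ, hc' σ hσ, hmem]
  have := hinj σ (hBA hσ) (show k0 - 1 ∈ Set.Iic m by simp; omega)
    (show k1 ∈ Set.Iic m by simpa using hk1m) heq
  omega

end Aux

/-- If a connected graph `Γ` possesses an exact perspectivity (a uniformity on the vertex set,
every entourage of which contains all but finitely many edges, with `⋂ U = Δ`), then `Γ` is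
fine: for all vertices `x, y` and all `n`, there are only finitely many arcs (embedded paths)
of length at most `n` from `x` to `y`. -/
theorem exact_perspectivity_implies_fine {M : Type*} (Γ : SimpleGraph M)
    (hconn : Γ.Connected)
    (U : Filter (M × M))
    (hrefl : ∀ s ∈ U, SetRel.id ⊆ s)
    (hsymm : ∀ s ∈ U, Prod.swap ⁻¹' s ∈ U)
    (hcomp : ∀ s ∈ U, ∃ t ∈ U, t ○ t ⊆ s)
    (hpersp : ∀ s ∈ U, {p : M × M | Γ.Adj p.1 p.2 ∧ p ∉ s}.Finite)
    (hexact : ⋂₀ U.sets = SetRel.id) :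
    ∀ (x y : M) (n : ℕ), {w : Γ.Walk x y | w.IsPath ∧ w.length ≤ n}.Finite := by
  intro x y n
  have key : ∀ m : ℕ, {w : Γ.Walk x y | w.IsPath ∧ w.length = m}.Finite := by
    intro m
    have hfin : ((fun (w : Γ.Walk x y) (i : ℕ) => w.getVert i) ''
        {w : Γ.Walk x y | w.IsPath ∧ w.length = m}).Finite := by
      apply core_finite U hcomp hpersp hexact x y m
      · rintro _ ⟨w, hw, rfl⟩
        exact w.getVert_zero
      · rintro _ ⟨w, hw, rfl⟩ i hi
        exact w.getVert_of_length_le (by rw [hw.2]; exact hi)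
      · rintro _ ⟨w, hw, rfl⟩ i hi
        exact w.adj_getVert_succ (by rw [hw.2]; exact hi)
      · rintro _ ⟨w, hw, rfl⟩
        have := walk_isPath_getVert_injOn hw.1
        rwa [hw.2] at this
    apply hfin.of_finite_image
    intro w1 h1 w2 h2 he
    exact walk_ext_getVert w1 w2 (h1.2.trans h2.2.symm) (congrFun he)
  have hsub : {w : Γ.Walk x y | w.IsPath ∧ w.length ≤ n} ⊆
      ⋃ m ∈ Finset.range (n + 1), {w : Γ.Walk x y | w.IsPath ∧ w.length = m} := by
    intro w hw
    exact Set.mem_biUnion (Finset.mem_range.mpr (Nat.lt_succ_of_le hw.2)) ⟨hw.1, rfl⟩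
  exact (Set.Finite.biUnion (Finset.range (n + 1)).finite_toSet fun m _ => key m).subset hsub
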